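/- Let (C, D, E, i_*, j^*, i^*, i^!, j_!, j_*) be a gluing datum of triangulated categories, and let t_D, t_E, t_C be t-structures on D, E, C respectively. Then t_C is glued from t_D and t_E — meaning that C^{t_C≤0} = { M ∈ C : j^*M ∈ E^{t_E≤0} and i^*M ∈ D^{t_D≤0} } and C^{t_C≥0} = { M ∈ C : j^*M ∈ E^{t_E≥0} and i^!M ∈ D^{t_D≥0} } — if and only if both i_* and j^* are t-exact (i.e., i_*(D^{t_D≤0}) ⊆ C^{t_C≤0}, i_*(D^{t_D≥0}) ⊆ C^{t_C≥0}, j^*(C^{t_C≤0}) ⊆ E^{t_E≤0}, and j^*(C^{t_C≥0}) ⊆ E^{t_E≥0}). -/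

import Mathlib

/-!
Statement 6: Let `(C, D, E, i_*, j^*, i^*, i^!, j_!, j_*)` be a gluing datum of triangulated
categories and let `t_D`, `t_E`, `t_C` be t-structures on `D`, `E`, `C`. Then `t_C` is glued
from `t_D` and `t_E` if and only if both `i_*` and `j^*` are t-exact.
-/

open CategoryTheory CategoryTheory.Limits CategoryTheory.Pretriangulated

universe v₁ v₂ v₃ u₁ u₂ u₃

/-- A *t-structure* on a pretriangulated category `C` given as a pair `(le, ge)` of strict
classes of objects. -/
structure TStructurePair (C : Type u₁) [Category.{v₁} C] [HasZeroObject C] [Preadditive C]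
    [HasShift C ℤ] [∀ n : ℤ, (shiftFunctor C n).Additive] [Pretriangulated C] where
  le : Set C
  ge : Set C
  le_iso : ∀ ⦃X Y : C⦄, (X ≅ Y) → X ∈ le → Y ∈ le
  ge_iso : ∀ ⦃X Y : C⦄, (X ≅ Y) → X ∈ ge → Y ∈ ge
  le_shift : ∀ X ∈ le, X⟦(1 : ℤ)⟧ ∈ le
  ge_shift : ∀ X ∈ ge, X⟦(-1 : ℤ)⟧ ∈ ge
  hom_zero : ∀ ⦃X Y : C⦄, X ∈ le → (Y⟦(1 : ℤ)⟧ ∈ ge) → ∀ f : X ⟶ Y, f = 0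
  exists_triangle : ∀ M : C, ∃ (A B : C) (f : A ⟶ M) (g : M ⟶ B) (h : B ⟶ A⟦(1 : ℤ)⟧),
    A ∈ le ∧ B⟦(1 : ℤ)⟧ ∈ ge ∧ Triangle.mk f g h ∈ distTriang C


section Aux

universe w₁ w₂ z₁ z₂

lemma homEquivZero {C₁ : Type w₁} {C₂ : Type w₂} [Category.{z₁} C₁] [Category.{z₂} C₂]
    [Preadditive C₁] [Preadditive C₂] {F : C₁ ⥤ C₂} {G : C₂ ⥤ C₁} [G.Additive]
    (adj : F ⊣ G) (X : C₁) (Y : C₂) :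
    adj.homEquiv X Y 0 = 0 := by
  simp [Adjunction.homEquiv_unit]

namespace TStructurePair

variable {C : Type u₁} [Category.{v₁} C] [HasZeroObject C] [Preadditive C]
    [HasShift C ℤ] [∀ n : ℤ, (shiftFunctor C n).Additive] [Pretriangulated C]

lemma hom_zero_shift (t : TStructurePair C) {X Y : C} (hX : X ∈ t.le) (hY : Y ∈ t.ge)
    (f : X⟦(1 : ℤ)⟧ ⟶ Y) : f = 0 := by
  have hY' : (Y⟦(-1 : ℤ)⟧)⟦(1 : ℤ)⟧ ∈ t.ge :=
    t.ge_iso ((shiftFunctorCompIsoId C (-1 : ℤ) (1 : ℤ) (by ring)).symm.app Y) hY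
  have h0 : (shiftFunctorCompIsoId C (1 : ℤ) (-1 : ℤ) (by ring)).inv.app X ≫
      (shiftFunctor C (-1 : ℤ)).map f = 0 := t.hom_zero hX hY' _
  apply (shiftFunctor C (-1 : ℤ)).map_injective
  rw [Functor.map_zero]
  have := congrArg (fun g => (shiftFunctorCompIsoId C (1 : ℤ) (-1 : ℤ) (by ring)).hom.app X ≫ g) h0
  simpa using this

lemma mem_le (t : TStructurePair C) {X : C}
    (h : ∀ Y : C, Y⟦(1 : ℤ)⟧ ∈ t.ge → ∀ f : X ⟶ Y, f = 0) : X ∈ t.le := by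
  obtain ⟨A, B, f, g, w, hA, hB, hT⟩ := t.exists_triangle X
  have hg : g = 0 := h B hB g
  obtain ⟨u, hu⟩ := Triangle.yoneda_exact₃ _ hT (𝟙 B) (by simp [hg]; exact zero_comp)
  have hu0 : u = 0 := t.hom_zero (t.le_shift A hA) hB u
  have hB0 : IsZero B := by
    rw [IsZero.iff_id_eq_zero, hu, hu0, comp_zero]
    rfl
  have hiso : IsIso (Triangle.mk f g w).mor₁ := (Triangle.isZero₃_iff_isIso₁ _ hT).1 hB0
  exact t.le_iso (@asIso _ _ _ _ (Triangle.mk f g w).mor₁ hiso) hA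

lemma mem_ge (t : TStructurePair C) {M : C}
    (h : ∀ X ∈ t.le, ∀ f : X⟦(1 : ℤ)⟧ ⟶ M, f = 0) : M ∈ t.ge := by
  obtain ⟨A, B, f, g, w, hA, hB, hT⟩ := t.exists_triangle (M⟦(-1 : ℤ)⟧)
  have hf : f = 0 := by
    have h1 : (shiftFunctor C (1 : ℤ)).map f ≫
        (shiftFunctorCompIsoId C (-1 : ℤ) (1 : ℤ) (by ring)).hom.app M = 0 := h A hA _
    apply (shiftFunctor C (1 : ℤ)).map_injective
    rw [Functor.map_zero]
    rw [← cancel_mono ((shiftFunctorCompIsoId C (-1 : ℤ) (1 : ℤ) (by ring)).hom.app M)]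
    simpa using h1
  obtain ⟨v, hv⟩ := Triangle.coyoneda_exact₂ _ (inv_rot_of_distTriang _ hT) (𝟙 A)
    (by simp [Triangle.invRotate, hf]; exact comp_zero)
  have hBge : B ∈ t.ge :=
    t.ge_iso ((shiftFunctorCompIsoId C (1 : ℤ) (-1 : ℤ) (by ring)).app B) (t.ge_shift _ hB)
  have hv0 : v = 0 := t.hom_zero hA
    (t.ge_iso ((shiftFunctorCompIsoId C (-1 : ℤ) (1 : ℤ) (by ring)).symm.app B) hBge) v
  have hA0 : IsZero A := by
    rw [IsZero.iff_id_eq_zero, hv, hv0, zero_comp]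
    rfl
  have hiso : IsIso (Triangle.mk f g w).mor₂ := (Triangle.isZero₁_iff_isIso₂ _ hT).1 hA0
  have hgi : IsIso g := hiso
  exact t.ge_iso (((shiftFunctor C (1 : ℤ)).mapIso (asIso g)).symm ≪≫
    (shiftFunctorCompIsoId C (-1 : ℤ) (1 : ℤ) (by ring)).app M) hB

lemma zero_le (t : TStructurePair C) {Z : C} (hZ : IsZero Z) : Z ∈ t.le :=
  t.mem_le (fun _ _ f => hZ.eq_of_src f 0)

lemma zero_ge (t : TStructurePair C) {Z : C} (hZ : IsZero Z) : Z ∈ t.ge :=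
  t.mem_ge (fun _ _ f => hZ.eq_of_tgt f 0)

end TStructurePair

end Aux

/-- Given a gluing datum `(C, D, E, iStar = i_*, jPull = j^*, iPull = i^*, iShriek = i^!,
jShriek = j_!, jStar = j_*)` of triangulated categories and t-structures `t_D`, `t_E`, `t_C`
on `D`, `E`, `C`, the t-structure `t_C` is glued from `t_D` and `t_E` if and only if `i_*`
and `j^*` are t-exact. -/
theorem glued_tStructure_iff_tExact
    {C : Type u₁} [Category.{v₁} C] [HasZeroObject C] [Preadditive C] [HasShift C ℤ]
    [∀ n : ℤ, (shiftFunctor C n).Additive] [Pretriangulated C] [IsTriangulated C]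
    {D : Type u₂} [Category.{v₂} D] [HasZeroObject D] [Preadditive D] [HasShift D ℤ]
    [∀ n : ℤ, (shiftFunctor D n).Additive] [Pretriangulated D] [IsTriangulated D]
    {E : Type u₃} [Category.{v₃} E] [HasZeroObject E] [Preadditive E] [HasShift E ℤ]
    [∀ n : ℤ, (shiftFunctor E n).Additive] [Pretriangulated E] [IsTriangulated E]
    -- the six exact functors of the gluing datum
    (iStar : D ⥤ C) [iStar.CommShift ℤ] [iStar.IsTriangulated]
    (jPull : C ⥤ E) [jPull.CommShift ℤ] [jPull.IsTriangulated]
    (iPull : C ⥤ D) [iPull.CommShift ℤ] [iPull.IsTriangulated]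
    (iShriek : C ⥤ D) [iShriek.CommShift ℤ] [iShriek.IsTriangulated]
    (jShriek : E ⥤ C) [jShriek.CommShift ℤ] [jShriek.IsTriangulated]
    (jStar : E ⥤ C) [jStar.CommShift ℤ] [jStar.IsTriangulated]
    -- the adjunctions: i^* ⊣ i_* ⊣ i^! and j_! ⊣ j^* ⊣ j_*
    (adj_i₁ : iPull ⊣ iStar) (adj_i₂ : iStar ⊣ iShriek)
    (adj_j₁ : jShriek ⊣ jPull) (adj_j₂ : jPull ⊣ jStar)
    -- i_* is fully faithful
    [iStar.Full] [iStar.Faithful]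
    -- j^* ∘ i_* = 0
    (hji : ∀ X : D, IsZero (jPull.obj (iStar.obj X)))
    -- the gluing distinguished triangles j_!j^*M → M → i_*i^*M and i_*i^!M → M → j_*j^*M
    (htri₁ : ∀ M : C, ∃ w : iStar.obj (iPull.obj M) ⟶ (jShriek.obj (jPull.obj M))⟦(1 : ℤ)⟧,
      Triangle.mk (adj_j₁.counit.app M) (adj_i₁.unit.app M) w ∈ distTriang C)
    (htri₂ : ∀ M : C, ∃ w : jStar.obj (jPull.obj M) ⟶ (iStar.obj (iShriek.obj M))⟦(1 : ℤ)⟧,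
      Triangle.mk (adj_i₂.counit.app M) (adj_j₂.unit.app M) w ∈ distTriang C)
    -- i^* ∘ j_! = 0 and i^! ∘ j_* = 0
    (hij₁ : ∀ Y : E, IsZero (iPull.obj (jShriek.obj Y)))
    (hij₂ : ∀ Y : E, IsZero (iShriek.obj (jStar.obj Y)))
    -- the adjunction transformations i^*i_* → id_D → i^!i_* and j^*j_* → id_E → j^*j_!
    -- are isomorphisms
    [IsIso adj_i₁.counit] [IsIso adj_i₂.unit] [IsIso adj_j₂.counit] [IsIso adj_j₁.unit]
    -- t-structures on D, E and C
    (tD : TStructurePair D) (tE : TStructurePair E) (tC : TStructurePair C) :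
    (tC.le = {M : C | jPull.obj M ∈ tE.le ∧ iPull.obj M ∈ tD.le} ∧
     tC.ge = {M : C | jPull.obj M ∈ tE.ge ∧ iShriek.obj M ∈ tD.ge}) ↔
    ((∀ X ∈ tD.le, iStar.obj X ∈ tC.le) ∧ (∀ X ∈ tD.ge, iStar.obj X ∈ tC.ge) ∧
     (∀ M ∈ tC.le, jPull.obj M ∈ tE.le) ∧ (∀ M ∈ tC.ge, jPull.obj M ∈ tE.ge)) := by
  constructor
  · rintro ⟨hle, hge⟩
    refine ⟨?_, ?_, ?_, ?_⟩
    · intro X hX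
      rw [hle]
      exact ⟨tE.zero_le (hji X), tD.le_iso (asIso (adj_i₁.counit.app X)).symm hX⟩
    · intro X hX
      rw [hge]
      exact ⟨tE.zero_ge (hji X), tD.ge_iso (asIso (adj_i₂.unit.app X)) hX⟩
    · intro M hM
      rw [hle] at hM
      exact hM.1
    · intro M hM
      rw [hge] at hM
      exact hM.1
  · rintro ⟨hi_le, hi_ge, hj_le, hj_ge⟩
    constructor
    · ext M
      simp only [Set.mem_setOf_eq]
      constructor
      · intro hM
        refine ⟨hj_le M hM, ?_⟩
        apply tD.mem_le
        intro Y hY f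
        have hY' : (iStar.obj Y)⟦(1 : ℤ)⟧ ∈ tC.ge :=
          tC.ge_iso ((iStar.commShiftIso (1 : ℤ)).app Y) (hi_ge _ hY)
        have h0 : adj_i₁.homEquiv M Y f = 0 := tC.hom_zero hM hY' _
        exact (adj_i₁.homEquiv M Y).injective (h0.trans (homEquivZero adj_i₁ M Y).symm)
      · rintro ⟨h1, h2⟩
        apply tC.mem_le
        intro Y hY f
        obtain ⟨w, hT⟩ := htri₁ M
        have hmor : adj_j₁.counit.app M ≫ f = 0 := by
          have hY' : (jPull.obj Y)⟦(1 : ℤ)⟧ ∈ tE.ge :=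
            tE.ge_iso ((jPull.commShiftIso (1 : ℤ)).app Y) (hj_ge _ hY)
          have h0 : adj_j₁.homEquiv (jPull.obj M) Y (adj_j₁.counit.app M ≫ f) = 0 :=
            tE.hom_zero h1 hY' _
          exact (adj_j₁.homEquiv _ _).injective (h0.trans (homEquivZero adj_j₁ _ _).symm)
        obtain ⟨g, hg⟩ := Triangle.yoneda_exact₂ _ hT f hmor
        have hg0 : g = 0 := tC.hom_zero (hi_le _ h2) hY g
        rw [hg, hg0, comp_zero]
        rfl
    · ext M
      simp only [Set.mem_setOf_eq]
      constructor
      · intro hM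
        refine ⟨hj_ge M hM, ?_⟩
        apply tD.mem_ge
        intro X hX f
        set g := (adj_i₂.homEquiv (X⟦(1 : ℤ)⟧) M).symm f with hgdef
        have hg : g = 0 := by
          have h0 : (iStar.commShiftIso (1 : ℤ)).inv.app X ≫ g = 0 :=
            tC.hom_zero_shift (hi_le _ hX) hM _
          have := congrArg (fun p => (iStar.commShiftIso (1 : ℤ)).hom.app X ≫ p) h0
          simpa using this
        have hf : f = (adj_i₂.homEquiv _ _) g :=
          ((adj_i₂.homEquiv _ _).apply_symm_apply f).symm
        rw [hf, hg, homEquivZero]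
      · rintro ⟨h1, h2⟩
        apply tC.mem_ge
        intro X hX f
        obtain ⟨w, hT⟩ := htri₂ M
        have hmor : f ≫ adj_j₂.unit.app M = 0 := by
          set g := (adj_j₂.homEquiv (X⟦(1 : ℤ)⟧) (jPull.obj M)).symm
            (f ≫ adj_j₂.unit.app M) with hgdef
          have hg : g = 0 := by
            have h0 : (jPull.commShiftIso (1 : ℤ)).inv.app X ≫ g = 0 :=
              tE.hom_zero_shift (hj_le _ hX) h1 _
            have := congrArg (fun p => (jPull.commShiftIso (1 : ℤ)).hom.app X ≫ p) h0
            simpa using this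
          have hf : f ≫ adj_j₂.unit.app M = (adj_j₂.homEquiv _ _) g :=
            ((adj_j₂.homEquiv _ _).apply_symm_apply _).symm
          rw [hf, hg, homEquivZero]
        obtain ⟨g, hg⟩ := Triangle.coyoneda_exact₂ _ hT f hmor
        have hg0 : g = 0 := tC.hom_zero_shift hX (hi_ge _ h2) g
        rw [hg, hg0, zero_comp]
        rfl
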